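/- Let k ≥ 2 and r ≥ 1 be integers, and let a₁, …, a_k be integers with gcd(a₁, …, a_k, r) = 1. Then there exists a k×k integer matrix M with det M = 1 such that Σ_{j=1}^{k} a_j M_{ij} ≡ 0 (mod r) for every i = 1, …, k−1, and Σ_{j=1}^{k} a_j M_{kj} ≡ 1 (mod r). -/

import Mathlib

open Matrix

/-- Key step: a matrix that is the identity except a 2×2 block `B` acting on the
last two coordinates. -/
lemma key_block (n : ℕ) (B : Matrix (Fin 2) (Fin 2) ℤ) (v : Fin (n+2) → ℤ)
    (hv : ∀ i : Fin (n+2), (i:ℕ) < n → v i = 0) :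
    ∃ T : Matrix (Fin (n+2)) (Fin (n+2)) ℤ, T.det = B.det ∧
      (∀ i : Fin (n+2), (i:ℕ) < n → (T *ᵥ v) i = 0) ∧
      (T *ᵥ v) ⟨n, by omega⟩ = B 0 0 * v ⟨n, by omega⟩ + B 0 1 * v ⟨n+1, by omega⟩ ∧
      (T *ᵥ v) ⟨n+1, by omega⟩ = B 1 0 * v ⟨n, by omega⟩ + B 1 1 * v ⟨n+1, by omega⟩ := by
  set e : Fin n ⊕ Fin 2 ≃ Fin (n+2) := finSumFinEquiv with he
  set T : Matrix (Fin (n+2)) (Fin (n+2)) ℤ :=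
    (Matrix.fromBlocks 1 0 0 B).submatrix e.symm e.symm with hT
  have hmv : T *ᵥ v = ((Matrix.fromBlocks 1 0 0 B) *ᵥ (v ∘ e)) ∘ e.symm := by
    rw [hT, Matrix.submatrix_mulVec_equiv]
    simp
  have h0 : (⟨n, by omega⟩ : Fin (n+2)) = e (Sum.inr 0) := by
    apply Fin.ext; simp [he]
  have h1 : (⟨n+1, by omega⟩ : Fin (n+2)) = e (Sum.inr 1) := by
    apply Fin.ext; simp [he]
  refine ⟨T, ?_, ?_, ?_, ?_⟩
  · rw [hT, Matrix.det_submatrix_equiv_self, Matrix.det_fromBlocks_zero₂₁]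
    simp
  · intro i hi
    have hi' : i = e (Sum.inl ⟨(i:ℕ), hi⟩) := by apply Fin.ext; simp [he]
    rw [hi', hmv]
    simp only [Function.comp_apply, Equiv.symm_apply_apply,
      Matrix.fromBlocks_mulVec, Sum.elim_inl, Matrix.one_mulVec, Matrix.zero_mulVec,
      Pi.add_apply, Pi.zero_apply, add_zero]
    have := hv (e (Sum.inl ⟨(i:ℕ), hi⟩)) (by simpa [he] using hi)
    simpa using this
  · rw [h0, h1, hmv]
    simp only [Function.comp_apply, Equiv.symm_apply_apply, Matrix.fromBlocks_mulVec,
      Sum.elim_inr, Matrix.zero_mulVec, Pi.add_apply, Pi.zero_apply, zero_add]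
    simp [Matrix.mulVec, dotProduct, Fin.sum_univ_two]
  · rw [h0, h1, hmv]
    simp only [Function.comp_apply, Equiv.symm_apply_apply, Matrix.fromBlocks_mulVec,
      Sum.elim_inr, Matrix.zero_mulVec, Pi.add_apply, Pi.zero_apply, zero_add]
    simp [Matrix.mulVec, dotProduct, Fin.sum_univ_two]

/-- There is an `SL` matrix sending `a` to a vector supported on the last
coordinate, whose value there divides all the `a i`. -/
lemma reduce_to_last : ∀ (n : ℕ) (a : Fin (n+1) → ℤ),
    ∃ (M : Matrix (Fin (n+1)) (Fin (n+1)) ℤ) (c : ℤ),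
      M.det = 1 ∧ (∀ i : Fin (n+1), (i:ℕ) < n → (M *ᵥ a) i = 0) ∧
      (M *ᵥ a) (Fin.last n) = c ∧ (∀ i, c ∣ a i) := by
  intro n
  induction n with
  | zero =>
    intro a
    refine ⟨1, a 0, by simp, by omega, by simp [Matrix.one_mulVec], ?_⟩
    intro i
    have : i = 0 := by apply Fin.ext; omega
    rw [this]
  | succ n ih =>
    intro a
    obtain ⟨M', c, hdet, hzero, hlast, hdvd⟩ := ih (a ∘ Fin.castSucc)
    set e : Fin (n+1) ⊕ Fin 1 ≃ Fin (n+2) := finSumFinEquiv with he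
    set M₁ : Matrix (Fin (n+2)) (Fin (n+2)) ℤ :=
      (Matrix.fromBlocks M' 0 0 1).submatrix e.symm e.symm with hM₁
    have hdet₁ : M₁.det = 1 := by
      rw [hM₁, Matrix.det_submatrix_equiv_self, Matrix.det_fromBlocks_zero₂₁, hdet]
      simp
    have hmv : M₁ *ᵥ a = ((Matrix.fromBlocks M' 0 0 1) *ᵥ (a ∘ e)) ∘ e.symm := by
      rw [hM₁, Matrix.submatrix_mulVec_equiv]
      simp
    have hcomp : (a ∘ e) ∘ Sum.inl = a ∘ Fin.castSucc := by
      funext j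
      simp [he, Fin.castSucc, Fin.castAdd]
    have hval : ∀ j : Fin (n+1), (M₁ *ᵥ a) (e (Sum.inl j)) = (M' *ᵥ (a ∘ Fin.castSucc)) j := by
      intro j
      rw [hmv]
      simp only [Function.comp_apply, Equiv.symm_apply_apply, Matrix.fromBlocks_mulVec,
        Sum.elim_inl, Matrix.zero_mulVec, Pi.add_apply, Pi.zero_apply, add_zero]
      rw [hcomp]
    have hinr0 : (e (Sum.inr 0) : Fin (n+2)) = ⟨n+1, by omega⟩ := by
      apply Fin.ext; simp [he]
    have hvlast : (M₁ *ᵥ a) ⟨n+1, by omega⟩ = a (Fin.last (n+1)) := by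
      rw [← hinr0, hmv]
      simp only [Function.comp_apply, Equiv.symm_apply_apply, Matrix.fromBlocks_mulVec,
        Sum.elim_inr, Matrix.zero_mulVec, Pi.add_apply, Pi.zero_apply, zero_add,
        Matrix.one_mulVec]
      congr 1
    have hv0 : ∀ i : Fin (n+2), (i:ℕ) < n → (M₁ *ᵥ a) i = 0 := by
      intro i hi
      have : i = e (Sum.inl ⟨(i:ℕ), by omega⟩) := by
        apply Fin.ext; simp [he]
      rw [this, hval]
      exact hzero _ (by simpa using hi)
    have hvn : (M₁ *ᵥ a) ⟨n, by omega⟩ = c := by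
      have : (⟨n, by omega⟩ : Fin (n+2)) = e (Sum.inl (Fin.last n)) := by
        apply Fin.ext; simp [he]
      rw [this, hval]
      exact hlast
    clear_value e M₁
    clear hmv hM₁ hcomp hval hinr0 he hlast hzero hdet ih
    set d : ℤ := a (Fin.last (n+1)) with hd
    clear_value d
    by_cases hg : Int.gcd c d = 0
    · -- everything is zero
      obtain ⟨hc0, hd0⟩ := Int.gcd_eq_zero_iff.mp hg
      refine ⟨M₁, 0, hdet₁, ?_, ?_, ?_⟩
      · intro i hi
        rcases Nat.lt_or_ge (i : ℕ) n with h | h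
        · exact hv0 i h
        · have : i = (⟨n, by omega⟩ : Fin (n+2)) := by
            apply Fin.ext; simp; omega
          rw [this, hvn, hc0]
      · have : Fin.last (n+1) = (⟨n+1, by omega⟩ : Fin (n+2)) := rfl
        rw [this, hvlast]
        exact hd0
      · intro i
        refine Fin.lastCases ?_ ?_ i
        · have : a (Fin.last (n+1)) = 0 := by rw [← hd]; exact hd0
          simp [this]
        · intro j
          have := hdvd j
          rw [hc0] at this
          simpa using this
    · -- Bezout: combine coordinates n and n+1
      obtain ⟨g, hgdef⟩ : ∃ g : ℤ, g = (Int.gcd c d : ℤ) := ⟨_, rfl⟩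
      obtain ⟨p, hp⟩ : ∃ p : ℤ, p = Int.gcdA c d := ⟨_, rfl⟩
      obtain ⟨q, hq⟩ : ∃ q : ℤ, q = Int.gcdB c d := ⟨_, rfl⟩
      have hgZ : g ≠ 0 := by rw [hgdef]; exact_mod_cast hg
      have hbez : g = c * p + d * q := by
        rw [hgdef, hp, hq]; exact Int.gcd_eq_gcd_ab c d
      obtain ⟨c₀, hc₀⟩ : g ∣ c := by rw [hgdef]; exact Int.gcd_dvd_left c d
      obtain ⟨d₀, hd₀⟩ : g ∣ d := by rw [hgdef]; exact Int.gcd_dvd_right c d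
      obtain ⟨T, hdetT, hT0, hTn, hTn1⟩ := key_block n !![d₀, -c₀; p, q] (M₁ *ᵥ a) hv0
      have e00 : (!![d₀, -c₀; p, q] : Matrix (Fin 2) (Fin 2) ℤ) 0 0 = d₀ := rfl
      have e01 : (!![d₀, -c₀; p, q] : Matrix (Fin 2) (Fin 2) ℤ) 0 1 = -c₀ := rfl
      have e10 : (!![d₀, -c₀; p, q] : Matrix (Fin 2) (Fin 2) ℤ) 1 0 = p := rfl
      have e11 : (!![d₀, -c₀; p, q] : Matrix (Fin 2) (Fin 2) ℤ) 1 1 = q := rfl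
      rw [e00, e01] at hTn
      rw [e10, e11] at hTn1
      have hdetT1 : T.det = 1 := by
        rw [hdetT, Matrix.det_fin_two_of]
        apply mul_left_cancel₀ hgZ
        rw [mul_one]
        linear_combination (-1 : ℤ) * hbez + (-p) * hc₀ + (-q) * hd₀
      refine ⟨T * M₁, g, by rw [Matrix.det_mul, hdetT1, hdet₁, one_mul], ?_, ?_, ?_⟩
      · intro i hi
        rw [← Matrix.mulVec_mulVec]
        rcases Nat.lt_or_ge (i : ℕ) n with h | h
        · exact hT0 i h
        · have hieq : i = (⟨n, by omega⟩ : Fin (n+2)) := by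
            apply Fin.ext; simp; omega
          rw [hieq, hTn, hvn, hvlast]
          linear_combination d₀ * hc₀ - c₀ * hd₀
      · rw [← Matrix.mulVec_mulVec]
        have hle : Fin.last (n+1) = (⟨n+1, by omega⟩ : Fin (n+2)) := rfl
        rw [hle, hTn1, hvn, hvlast]
        linear_combination (-1 : ℤ) * hbez
      · intro i
        refine Fin.lastCases ?_ ?_ i
        · rw [← hd]
          exact ⟨d₀, hd₀⟩
        · intro j
          have := hdvd j
          simp only [Function.comp_apply] at this
          exact dvd_trans ⟨c₀, hc₀⟩ this



/-- Let `k ≥ 2` and `r ≥ 1` be integers, and let `a₁, …, a_k` be integers with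
`gcd(a₁, …, a_k, r) = 1`. Then there exists a `k×k` integer matrix `M` with `det M = 1`
such that `∑ j, a j * M i j ≡ 0 (mod r)` for every row `i < k-1`, and
`∑ j, a j * M (k-1) j ≡ 1 (mod r)`. -/
theorem stmt_1 (k r : ℕ) (hk : 2 ≤ k) (hr : 1 ≤ r) (a : Fin k → ℤ)
    (hgcd : Int.gcd (Finset.univ.gcd a) (r : ℤ) = 1) :
    ∃ M : Matrix (Fin k) (Fin k) ℤ, M.det = 1 ∧
      (∀ i : Fin k, (i : ℕ) < k - 1 → (∑ j, a j * M i j) ≡ 0 [ZMOD (r : ℤ)]) ∧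
      (∑ j, a j * M ⟨k - 1, by omega⟩ j) ≡ 1 [ZMOD (r : ℤ)] := by
  obtain ⟨m, rfl⟩ : ∃ m, k = m + 2 := ⟨k - 2, by omega⟩
  obtain ⟨M₀, c, hdet₀, hzero, hlastc, hdvd⟩ := reduce_to_last (m+1) a
  -- `c` has the same gcd with `r` as the gcd of the `a i`
  have hgc : Finset.univ.gcd a ∣ c := by
    rw [← hlastc]
    unfold Matrix.mulVec dotProduct
    exact Finset.dvd_sum fun j _ =>
      Dvd.dvd.mul_left (Finset.gcd_dvd (Finset.mem_univ j)) _
  have hcg : c ∣ Finset.univ.gcd a := Finset.dvd_gcd fun i _ => hdvd i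
  have habs : c.natAbs = (Finset.univ.gcd a).natAbs :=
    Nat.dvd_antisymm (Int.natAbs_dvd_natAbs.2 hcg) (Int.natAbs_dvd_natAbs.2 hgc)
  have hcr : Int.gcd c (r : ℤ) = 1 := by
    rw [Int.gcd_def, habs, ← Int.gcd_def]
    exact hgcd
  -- Bezout: c * s + r * v = 1
  obtain ⟨s, hs⟩ : ∃ s : ℤ, s = Int.gcdA c (r : ℤ) := ⟨_, rfl⟩
  obtain ⟨w, hw⟩ : ∃ w : ℤ, w = Int.gcdB c (r : ℤ) := ⟨_, rfl⟩
  have hbez : 1 = c * s + (r : ℤ) * w := by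
    rw [hs, hw, ← Int.gcd_eq_gcd_ab c (r : ℤ), hcr]
    norm_num
  have hsr : Int.gcd s (r : ℤ) = 1 := by
    rw [← Int.isCoprime_iff_gcd_eq_one]
    exact ⟨c, w, by linarith [hbez]⟩
  obtain ⟨p, hp⟩ : ∃ p : ℤ, p = Int.gcdA s (r : ℤ) := ⟨_, rfl⟩
  obtain ⟨q, hq⟩ : ∃ q : ℤ, q = Int.gcdB s (r : ℤ) := ⟨_, rfl⟩
  have hbez2 : 1 = s * p + (r : ℤ) * q := by
    rw [hp, hq, ← Int.gcd_eq_gcd_ab s (r : ℤ), hsr]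
    norm_num
  have hv0 : ∀ i : Fin (m+2), (i : ℕ) < m → (M₀ *ᵥ a) i = 0 :=
    fun i hi => hzero i (by omega)
  obtain ⟨T, hdetT, hT0, hTn, hTn1⟩ := key_block m !![p, (r : ℤ); -q, s] (M₀ *ᵥ a) hv0
  have e00 : (!![p, (r : ℤ); -q, s] : Matrix (Fin 2) (Fin 2) ℤ) 0 0 = p := rfl
  have e01 : (!![p, (r : ℤ); -q, s] : Matrix (Fin 2) (Fin 2) ℤ) 0 1 = (r : ℤ) := rfl
  have e10 : (!![p, (r : ℤ); -q, s] : Matrix (Fin 2) (Fin 2) ℤ) 1 0 = -q := rfl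
  have e11 : (!![p, (r : ℤ); -q, s] : Matrix (Fin 2) (Fin 2) ℤ) 1 1 = s := rfl
  rw [e00, e01] at hTn
  rw [e10, e11] at hTn1
  have hdetT1 : T.det = 1 := by
    rw [hdetT, Matrix.det_fin_two_of]
    linarith [hbez2]
  have hvm : (M₀ *ᵥ a) ⟨m, by omega⟩ = 0 := hzero _ (by simp)
  have hvm1 : (M₀ *ᵥ a) ⟨m+1, by omega⟩ = c := by
    have : (⟨m+1, by omega⟩ : Fin (m+2)) = Fin.last (m+1) := rfl
    rw [this, hlastc]
  have hsum : ∀ (N : Matrix (Fin (m+2)) (Fin (m+2)) ℤ) (i : Fin (m+2)),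
      ∑ j, a j * N i j = (N *ᵥ a) i := by
    intro N i
    unfold Matrix.mulVec dotProduct
    exact Finset.sum_congr rfl fun j _ => mul_comm _ _
  refine ⟨T * M₀, by rw [Matrix.det_mul, hdetT1, hdet₀, one_mul], ?_, ?_⟩
  · intro i hi
    rw [hsum, ← Matrix.mulVec_mulVec]
    rcases Nat.lt_or_ge (i : ℕ) m with h | h
    · rw [hT0 i h]
    · have : i = (⟨m, by omega⟩ : Fin (m+2)) := by
        apply Fin.ext; simp; omega
      rw [this, hTn, hvm, hvm1, mul_zero, zero_add]
      exact Int.modEq_zero_iff_dvd.mpr ⟨c, rfl⟩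
  · rw [hsum, ← Matrix.mulVec_mulVec]
    have : (⟨m + 2 - 1, by omega⟩ : Fin (m+2)) = ⟨m+1, by omega⟩ := rfl
    rw [this, hTn1, hvm, hvm1, mul_zero, zero_add]
    rw [Int.modEq_iff_dvd]
    exact ⟨w, by linarith [hbez]⟩
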